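/- The dimension of the space x ∧ [P_{n}(ℝ³)]³ = {x ∧ p : p ∈ [P_n(ℝ³)]³} equals 3·π_{n+1,3} - π_{n+2,3} + 1, i.e., 3·dim(P_{n+1}) - dim(P_{n+2}) + 1. -/

import Mathlib

open MvPolynomial

set_option maxHeartbeats 1000000
set_option synthInstance.maxHeartbeats 1000000

noncomputable section

abbrev Poly3 := MvPolynomial (Fin 3) ℝ

/-- The cross product `p ↦ x ∧ p` with the position vector, as a linear map:
`(x ∧ p)_i = x_{i+1} p_{i+2} - x_{i+2} p_{i+1}` (indices mod 3). -/
def xcrossL : (Fin 3 → Poly3) →ₗ[ℝ] (Fin 3 → Poly3) :=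
  LinearMap.pi fun i : Fin 3 =>
    LinearMap.mulLeft ℝ (X (i + 1)) ∘ₗ LinearMap.proj (i + 2)
      - LinearMap.mulLeft ℝ (X (i + 2)) ∘ₗ LinearMap.proj (i + 1)

/-- The space `[P_n(ℝ³)]³`. -/
def Vn (n : ℕ) : Submodule ℝ (Fin 3 → Poly3) :=
  Submodule.pi Set.univ fun _ => restrictTotalDegree (Fin 3) ℝ n

/-! ### Counting: the dimension of `P_m(ℝ³)` -/

def slackEquiv (m : ℕ) : {f : Fin 3 → ℕ // ∑ i, f i ≤ m} ≃ {g : Fin 4 → ℕ // ∑ i, g i = m} where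
  toFun f := ⟨Fin.cons (m - ∑ i, f.1 i) f.1, by
    have h := f.2
    rw [Fin.sum_univ_succ]
    simp only [Fin.cons_zero, Fin.cons_succ]
    omega⟩
  invFun g := ⟨fun i => g.1 i.succ, by
    have h := g.2
    rw [Fin.sum_univ_succ] at h
    show (∑ i : Fin 3, g.1 i.succ) ≤ m
    omega⟩
  left_inv f := Subtype.ext (by funext i; simp)
  right_inv g := Subtype.ext (by
    funext i
    refine Fin.cases ?_ (fun j => ?_) i
    · have h := g.2
      rw [Fin.sum_univ_succ] at h
      simp only [Fin.cons_zero]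
      show m - (∑ i : Fin 3, g.1 i.succ) = g.1 0
      omega
    · simp)

lemma finsupp_sum_eq_sum {k : ℕ} (s : Fin k →₀ ℕ) : (s.sum fun _ e => e) = ∑ i, s i :=
  Finsupp.sum_fintype _ _ (fun _ => rfl)

def funEquiv1 (m : ℕ) :
    {s : Fin 3 →₀ ℕ // (s.sum fun _ e => e) ≤ m} ≃ {f : Fin 3 → ℕ // ∑ i, f i ≤ m} :=
  Finsupp.equivFunOnFinite.subtypeEquiv (fun s => by rw [finsupp_sum_eq_sum]; rfl)

def funEquiv2 (m : ℕ) :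
    {g : Fin 4 → ℕ // ∑ i, g i = m} ≃ {s : Fin 4 →₀ ℕ // (s.sum fun _ e => e) = m} :=
  Finsupp.equivFunOnFinite.symm.subtypeEquiv (fun g => by
    rw [finsupp_sum_eq_sum (Finsupp.equivFunOnFinite.symm g)]
    simp)

def symEquiv (m : ℕ) :
    {s : Fin 4 →₀ ℕ // (s.sum fun _ e => e) = m} ≃ Sym (Fin 4) m where
  toFun s := ⟨Finsupp.toMultiset s.1, by rw [Finsupp.card_toMultiset]; exact s.2⟩
  invFun μ := ⟨Multiset.toFinsupp μ.1, by
    have h1 : Finsupp.toMultiset (Multiset.toFinsupp μ.1) = μ.1 :=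
      Multiset.toFinsupp_toMultiset μ.1
    have h2 := Finsupp.card_toMultiset (Multiset.toFinsupp μ.1)
    rw [h1] at h2
    rw [show ((Multiset.toFinsupp μ.1).sum fun _ e => e)
        = (Multiset.toFinsupp μ.1).sum (fun _ => id) from rfl, ← h2]
    exact μ.2⟩
  left_inv s := Subtype.ext (Finsupp.toMultiset_toFinsupp s.1)
  right_inv μ := Subtype.ext (Multiset.toFinsupp_toMultiset μ.1)

def degLeEquiv (m : ℕ) :
    {s : Fin 3 →₀ ℕ // (s.sum fun _ e => e) ≤ m} ≃ Sym (Fin 4) m :=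
  ((funEquiv1 m).trans (slackEquiv m)).trans ((funEquiv2 m).trans (symEquiv m))

lemma finrank_rtd (m : ℕ) :
    Module.finrank ℝ ↥(restrictTotalDegree (Fin 3) ℝ m) = (m + 3).choose 3 := by
  have fin1 : Fintype ↥{ n : Fin 3 →₀ ℕ | (n.sum fun _ e => e) ≤ m } :=
    Fintype.ofEquiv _ (degLeEquiv m).symm
  have hb := Module.finrank_eq_card_basis
    (basisRestrictSupport ℝ { n : Fin 3 →₀ ℕ | (n.sum fun _ e => e) ≤ m })
  rw [show restrictTotalDegree (Fin 3) ℝ m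
      = restrictSupport ℝ { n : Fin 3 →₀ ℕ | (n.sum fun _ e => e) ≤ m } from rfl, hb]
  have h2 : Nat.card ↥{ n : Fin 3 →₀ ℕ | (n.sum fun _ e => e) ≤ m }
      = Nat.card (Sym (Fin 4) m) := Nat.card_congr (degLeEquiv m)
  rw [Fintype.card_eq_nat_card, h2, Nat.card_eq_fintype_card, Sym.card_sym_eq_choose]
  rw [show Fintype.card (Fin 4) + m - 1 = m + 3 by simp; omega]
  rw [← Nat.choose_symm (by omega : 3 ≤ m + 3)]
  congr 1

/-! ### The kernel -/

def muL : Poly3 →ₗ[ℝ] (Fin 3 → Poly3) :=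
  LinearMap.pi fun i : Fin 3 => LinearMap.mulLeft ℝ (X i)

lemma muL_apply (q : Poly3) (i : Fin 3) : muL q i = X i * q := rfl

lemma muL_inj : Function.Injective muL := by
  intro q q' h
  have h0 : X (0 : Fin 3) * q = X 0 * q' := congrFun h 0
  exact mul_left_cancel₀ (X_ne_zero 0) h0

lemma xcrossL_apply (p : Fin 3 → Poly3) (i : Fin 3) :
    xcrossL p i = X (i + 1) * p (i + 2) - X (i + 2) * p (i + 1) := rfl

lemma X_dvd_of_eq {a b : Fin 3} (hab : a ≠ b) {p r : Poly3} (h : X a * p = X b * r) :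
    X a ∣ r := by
  classical
  rw [r.as_sum]
  refine Finset.dvd_sum fun v hv => ?_
  rw [X_dvd_monomial]
  by_cases hva : v a ≠ 0
  · exact Or.inr hva
  push_neg at hva
  left
  have k1 : coeff (Finsupp.single b 1 + v) (X b * r) = coeff v r := coeff_X_mul _ _ _
  rw [← h, coeff_X_mul'] at k1
  have ha : a ∉ (Finsupp.single b 1 + v).support := by
    simp only [Finsupp.mem_support_iff, Finsupp.add_apply, ne_eq, not_not]
    rw [Finsupp.single_eq_of_ne' (Ne.symm hab), hva]
    rfl
  rw [if_neg ha] at k1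
  exact k1.symm

lemma ker_xcrossL (p : Fin 3 → Poly3) :
    xcrossL p = 0 ↔ ∃ q : Poly3, p = muL q := by
  constructor
  · intro h
    have h1 : X (2 : Fin 3) * p 0 = X 0 * p 2 := by
      have := congrFun h 1
      rw [xcrossL_apply] at this
      have e1 : (1 : Fin 3) + 1 = 2 := by decide
      have e2 : (1 : Fin 3) + 2 = 0 := by decide
      rw [e1, e2] at this
      simpa [sub_eq_zero] using this
    have h2 : X (0 : Fin 3) * p 1 = X 1 * p 0 := by
      have := congrFun h 2
      rw [xcrossL_apply] at this
      have e1 : (2 : Fin 3) + 1 = 0 := by decide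
      have e2 : (2 : Fin 3) + 2 = 1 := by decide
      rw [e1, e2] at this
      simpa [sub_eq_zero] using this
    obtain ⟨q, hq⟩ : X (0 : Fin 3) ∣ p 0 :=
      X_dvd_of_eq (show (0 : Fin 3) ≠ 1 by decide) h2
    refine ⟨q, ?_⟩
    have hp1 : p 1 = X 1 * q := by
      apply mul_left_cancel₀ (X_ne_zero (0 : Fin 3))
      rw [h2, hq]; ring
    have hp2 : p 2 = X 2 * q := by
      apply mul_left_cancel₀ (X_ne_zero (0 : Fin 3))
      rw [← h1, hq]; ring
    funext i
    fin_cases i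
    · rw [muL_apply]; exact hq
    · rw [muL_apply]; exact hp1
    · rw [muL_apply]; exact hp2
  · rintro ⟨q, rfl⟩
    funext i
    rw [Pi.zero_apply, xcrossL_apply, muL_apply, muL_apply]
    ring

lemma support_bound {q : Poly3} {n : ℕ} (h : muL q ∈ Vn n) :
    ∀ d ∈ q.support, (d.sum fun _ e => e) + 1 ≤ n := by
  intro d hd
  have h0 : muL q 0 ∈ restrictTotalDegree (Fin 3) ℝ n := h 0 (Set.mem_univ 0)
  rw [mem_restrictTotalDegree] at h0
  have hmem : Finsupp.single (0 : Fin 3) 1 + d ∈ (muL q 0).support := by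
    rw [mem_support_iff, muL_apply, coeff_X_mul]
    exact mem_support_iff.mp hd
  have hle := le_totalDegree hmem
  have hsum : ((Finsupp.single (0 : Fin 3) 1 + d).sum fun _ e => e)
      = 1 + (d.sum fun _ e => e) := by
    rw [Finsupp.sum_add_index' (fun _ => rfl) (fun _ _ _ => rfl),
      Finsupp.sum_single_index rfl]
  omega

lemma inf_ker_zero : Vn 0 ⊓ LinearMap.ker xcrossL = ⊥ := by
  rw [eq_bot_iff]
  intro p hp
  rw [Submodule.mem_inf] at hp
  obtain ⟨hp1, hk⟩ := hp
  rw [LinearMap.mem_ker, ker_xcrossL] at hk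
  obtain ⟨q, rfl⟩ := hk
  have hb := support_bound hp1
  have hq : q = 0 := by
    by_contra hq
    obtain ⟨d, hd⟩ := Finset.nonempty_iff_ne_empty.mpr (mt MvPolynomial.support_eq_empty.mp hq)
    have := hb d hd
    omega
  rw [Submodule.mem_bot, hq, map_zero]

lemma inf_ker_succ (m : ℕ) :
    Vn (m + 1) ⊓ LinearMap.ker xcrossL
      = Submodule.map muL (restrictTotalDegree (Fin 3) ℝ m) := by
  apply le_antisymm
  · intro p hp
    rw [Submodule.mem_inf] at hp
    obtain ⟨hp1, hk⟩ := hp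
    rw [LinearMap.mem_ker, ker_xcrossL] at hk
    obtain ⟨q, rfl⟩ := hk
    refine Submodule.mem_map.mpr ⟨q, ?_, rfl⟩
    rw [mem_restrictTotalDegree, totalDegree]
    apply Finset.sup_le
    intro d hd
    have := support_bound hp1 d hd
    have : (d.sum fun _ e => e) ≤ m := by omega
    exact this
  · intro p hp
    obtain ⟨q, hq, rfl⟩ := Submodule.mem_map.mp hp
    rw [mem_restrictTotalDegree] at hq
    rw [Submodule.mem_inf]
    constructor
    · intro i _
      show muL q i ∈ restrictTotalDegree (Fin 3) ℝ (m + 1)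
      rw [mem_restrictTotalDegree, muL_apply]
      calc (X i * q).totalDegree ≤ (X i).totalDegree + q.totalDegree := totalDegree_mul _ _
        _ ≤ 1 + m := by rw [totalDegree_X]; omega
        _ = m + 1 := by omega
    · rw [LinearMap.mem_ker, ker_xcrossL]
      exact ⟨q, rfl⟩

/-! ### Vn as a pi type -/

def vnEquiv (n : ℕ) : (Fin 3 → ↥(restrictTotalDegree (Fin 3) ℝ n)) ≃ₗ[ℝ] ↥(Vn n) where
  toFun f := ⟨fun i => (f i : Poly3), fun i _ => (f i).2⟩
  map_add' f g := rfl
  map_smul' c f := rfl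
  invFun g := fun i => ⟨g.1 i, g.2 i (Set.mem_univ i)⟩
  left_inv f := rfl
  right_inv g := rfl

instance (n : ℕ) : FiniteDimensional ℝ ↥(Vn n) :=
  Module.Finite.equiv (vnEquiv n)

lemma finrank_Vn (n : ℕ) : Module.finrank ℝ ↥(Vn n) = 3 * (n + 3).choose 3 := by
  rw [← LinearEquiv.finrank_eq (vnEquiv n), Module.finrank_pi_fintype]
  simp [finrank_rtd, Finset.sum_const]

/-! ### Pascal arithmetic -/

lemma pascal_identity (n : ℕ) :
    3 * Nat.choose (n + 3) 3 + Nat.choose (n + 5) 3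
      = 3 * Nat.choose (n + 4) 3 + 1 + Nat.choose (n + 2) 3 := by
  have a1 : (n + 3).choose 3 = (n + 2).choose 2 + (n + 2).choose 3 := Nat.choose_succ_succ (n + 2) 2
  have a2 : (n + 4).choose 3 = (n + 3).choose 2 + (n + 3).choose 3 := Nat.choose_succ_succ (n + 3) 2
  have a3 : (n + 5).choose 3 = (n + 4).choose 2 + (n + 4).choose 3 := Nat.choose_succ_succ (n + 4) 2
  have b1 : (n + 3).choose 2 = (n + 2).choose 1 + (n + 2).choose 2 := Nat.choose_succ_succ (n + 2) 1
  have b2 : (n + 4).choose 2 = (n + 3).choose 1 + (n + 3).choose 2 := Nat.choose_succ_succ (n + 3) 1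
  have c1 : (n + 2).choose 1 = n + 2 := Nat.choose_one_right _
  have c2 : (n + 3).choose 1 = n + 3 := Nat.choose_one_right _
  omega

/-! ### Main theorem -/

lemma finrank_inf_ker (n : ℕ) :
    Module.finrank ℝ ↥(Vn n ⊓ LinearMap.ker xcrossL) = (n + 2).choose 3 := by
  cases n with
  | zero =>
    rw [inf_ker_zero]
    simp [Nat.choose]
  | succ m =>
    rw [inf_ker_succ]
    rw [← LinearEquiv.finrank_eq
      (Submodule.equivMapOfInjective muL muL_inj (restrictTotalDegree (Fin 3) ℝ m))]
    rw [finrank_rtd]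

/-- The dimension of `x ∧ [P_n(ℝ³)]³` equals `3·π_{n+1,3} - π_{n+2,3} + 1`,
where `π_{m,3} = dim P_m(ℝ³) = binom(m+3,3)`. -/
theorem dim_xcross_polys (n : ℕ) :
    (Module.finrank ℝ ↥(Submodule.map xcrossL (Vn n)) : ℤ)
      = 3 * Nat.choose (n + 1 + 3) 3 - Nat.choose (n + 2 + 3) 3 + 1 := by
  have hrange : LinearMap.range (xcrossL.domRestrict (Vn n)) = Submodule.map xcrossL (Vn n) :=
    LinearMap.range_domRestrict _ _
  have hrn := LinearMap.finrank_range_add_finrank_ker (xcrossL.domRestrict (Vn n))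
  rw [hrange, finrank_Vn] at hrn
  have hker : Module.finrank ℝ ↥(LinearMap.ker (xcrossL.domRestrict (Vn n)))
      = (n + 2).choose 3 := by
    rw [LinearMap.ker_domRestrict]
    have heq : Submodule.comap (Vn n).subtype (LinearMap.ker xcrossL)
        = Submodule.comap (Vn n).subtype (Vn n ⊓ LinearMap.ker xcrossL) := by
      rw [Submodule.comap_inf, Submodule.comap_subtype_self, top_inf_eq]
    rw [heq,
      LinearEquiv.finrank_eq (Submodule.comapSubtypeEquivOfLe
        (inf_le_left : Vn n ⊓ LinearMap.ker xcrossL ≤ Vn n)),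
      finrank_inf_ker]
  rw [hker] at hrn
  have hp := pascal_identity n
  have e1 : n + 1 + 3 = n + 4 := by omega
  have e2 : n + 2 + 3 = n + 5 := by omega
  rw [e1, e2]
  omega
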